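/- Let γ ∈ [1, 2), λ > 0, and x ≥ y ≥ 0 with x ≥ 1. Then x^γ − y^γ − (γ/2)(x − y)(x^{γ−1} + y^{γ−1}) + (λ²γ²/8)(x^{2γ−2} − y^{2γ−2}) ≥ 0. -/

import Mathlib

open Real Set

/-- Bernoulli-type: for `0 ≤ p ≤ 1` and `0 ≤ y ≤ t`, `p * (t - y) * t^(p-1) ≤ t^p - y^p`. -/
private lemma key_deriv_ineq {p y t : ℝ} (hp0 : 0 ≤ p) (hp1 : p ≤ 1) (hy : 0 < y)
    (hyt : y ≤ t) : p * (t - y) * t ^ (p - 1) ≤ t ^ p - y ^ p := by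
  have ht : 0 < t := hy.trans_le hyt
  have hs : -1 ≤ y / t - 1 := by
    have : 0 ≤ y / t := div_nonneg hy.le ht.le
    linarith
  have hb := rpow_one_add_le_one_add_mul_self hs hp0 hp1
  rw [add_sub_cancel] at hb
  -- hb : (y / t) ^ p ≤ 1 + p * (y / t - 1)
  have htp : 0 < t ^ p := Real.rpow_pos_of_pos ht p
  have hdiv : (y / t) ^ p = y ^ p / t ^ p := Real.div_rpow hy.le ht.le p
  rw [hdiv, div_le_iff₀ htp] at hb
  -- hb : y ^ p ≤ (1 + p * (y / t - 1)) * t ^ p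
  have hsub : t ^ (p - 1) = t ^ p / t := Real.rpow_sub_one ht.ne' p
  have : (1 + p * (y / t - 1)) * t ^ p = t ^ p + p * (y - t) * (t ^ p / t) := by
    field_simp
  rw [this, ← hsub] at hb
  nlinarith [hb]

private lemma main_ineq {γ x y : ℝ} (hγ : 1 ≤ γ) (hγ2 : γ < 2) (hy : 0 ≤ y)
    (hxy : y ≤ x) :
    γ / 2 * (x - y) * (x ^ (γ - 1) + y ^ (γ - 1)) ≤ x ^ γ - y ^ γ := by
  rcases eq_or_lt_of_le hy with rfl | hy0
  · -- y = 0
    rcases eq_or_lt_of_le hxy with rfl | hx0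
    · simp
    rcases eq_or_lt_of_le hγ with rfl | hγ1
    · simp
      norm_num
      linarith
    · have h0γ : (0:ℝ) ^ γ = 0 := Real.zero_rpow (by positivity)
      have h0γ1 : (0:ℝ) ^ (γ - 1) = 0 := Real.zero_rpow (by linarith)
      rw [h0γ, h0γ1]
      have hxx : x * x ^ (γ - 1) = x ^ γ := by
        nth_rewrite 1 [← Real.rpow_one x]
        rw [← Real.rpow_add hx0]
        ring_nf
      have hxγ : 0 ≤ x ^ γ := Real.rpow_nonneg hx0.le γ
      calc γ / 2 * (x - 0) * (x ^ (γ - 1) + 0) = γ / 2 * (x * x ^ (γ - 1)) := by ring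
        _ = γ / 2 * x ^ γ := by rw [hxx]
        _ ≤ x ^ γ - 0 := by nlinarith
  · -- y > 0 : calculus
    set f : ℝ → ℝ := fun t => t ^ γ - γ / 2 * (t - y) * (t ^ (γ - 1) + y ^ (γ - 1)) with hf
    have hder : ∀ t : ℝ, 0 < t → HasDerivAt f
        (γ * t ^ (γ - 1) - γ / 2 * ((t - y) * ((γ - 1) * t ^ (γ - 1 - 1))
          + 1 * (t ^ (γ - 1) + y ^ (γ - 1)))) t := by
      intro t ht
      have h1 : HasDerivAt (fun t : ℝ => t ^ γ) (γ * t ^ (γ - 1)) t :=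
        Real.hasDerivAt_rpow_const (Or.inl ht.ne')
      have h2 : HasDerivAt (fun t : ℝ => t ^ (γ - 1) + y ^ (γ - 1))
          ((γ - 1) * t ^ (γ - 1 - 1)) t := by
        simpa using (Real.hasDerivAt_rpow_const (p := γ - 1) (Or.inl ht.ne')).add_const
          (y ^ (γ - 1))
      have h3 : HasDerivAt (fun t : ℝ => t - y) 1 t := (hasDerivAt_id t).sub_const y
      have h4 := ((h3.mul h2).const_mul (γ / 2))
      have h5 := h1.sub h4
      have hfe : f = fun t => t ^ γ - γ / 2 * ((t - y) * (t ^ (γ - 1) + y ^ (γ - 1))) := by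
        funext t; simp only [hf]; ring
      rw [hfe]
      exact h5.congr_deriv (by ring)
    have hmono : MonotoneOn f (Icc y x) := by
      apply monotoneOn_of_deriv_nonneg (convex_Icc y x)
      · intro t ht
        exact (hder t (lt_of_lt_of_le hy0 ht.1)).continuousAt.continuousWithinAt
      · intro t ht
        rw [interior_Icc] at ht
        exact ((hder t (hy0.trans ht.1)).differentiableAt).differentiableWithinAt
      · intro t ht
        rw [interior_Icc] at ht
        have ht0 : 0 < t := hy0.trans ht.1
        rw [(hder t ht0).deriv]
        have hkey := key_deriv_ineq (by linarith : (0:ℝ) ≤ γ - 1) (by linarith : γ - 1 ≤ 1)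
          hy0 ht.1.le
        have hγ12 : γ - 1 - 1 = γ - 2 := by ring
        nlinarith [hkey]
    have := hmono (left_mem_Icc.mpr hxy) (right_mem_Icc.mpr hxy) hxy
    simp only [hf] at this
    have hyy : y ^ γ - γ / 2 * (y - y) * (y ^ (γ - 1) + y ^ (γ - 1)) = y ^ γ := by ring
    linarith [this]

theorem stmt_6 (γ lam x y : ℝ) (hγ : 1 ≤ γ) (hγ2 : γ < 2) (hlam : 0 < lam)
    (hy : 0 ≤ y) (hxy : y ≤ x) (hx : 1 ≤ x) :
    x ^ γ - y ^ γ - (γ / 2) * (x - y) * (x ^ (γ - 1) + y ^ (γ - 1))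
      + (lam ^ 2 * γ ^ 2 / 8) * (x ^ (2 * γ - 2) - y ^ (2 * γ - 2)) ≥ 0 := by
  have h1 := main_ineq hγ hγ2 hy hxy
  have h2 : y ^ (2 * γ - 2) ≤ x ^ (2 * γ - 2) :=
    Real.rpow_le_rpow hy hxy (by linarith)
  have h3 : 0 ≤ lam ^ 2 * γ ^ 2 / 8 * (x ^ (2 * γ - 2) - y ^ (2 * γ - 2)) :=
    mul_nonneg (by positivity) (by linarith)
  linarith
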